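/- Let a_1, ..., a_n be positive integers with a_1 ≤ ... ≤ a_n, and k ≤ n/2 a natural number. Then for every subset G ⊆ [n] that is not a ballot set of size at most k (i.e., G either has more than k elements or fails the ballot condition), there exist a set T ⊆ G with T ∈ H_t for some t, or |G| > k; in either case, the family S(a,k) does not shatter G 'fully from both ends': it is impossible that both some F with Σ_{i∈F} a_i = k contains G and some F' with Σ_{i∈F'} a_i = k is disjoint from G ∩ [2t-1] in the relevant window, whenever T ∈ H_t with T ⊆ G. -/

import Mathlib

def Ht (n t : ℕ) (T : Finset ℕ) : Prop :=
  T ⊆ Finset.Icc 1 n ∧ T.card = t ∧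
  (∀ s ∈ T, (T.filter (· ≤ s)).card < t → 2 * (T.filter (· ≤ s)).card ≤ s) ∧
  (∀ s ∈ T, (T.filter (· ≤ s)).card = t → s < 2 * t)

/-- Hall-type matching lemma: if above every element of `C` there are at least
as many elements of `T` as of `C`, and `a` is monotone on `[1,n]`, then there
is a subset `T' ⊆ T` of the same cardinality as `C` whose `a`-sum dominates
that of `C`. -/
lemma hallSum (n : ℕ) (a : ℕ → ℕ)
    (hmono : ∀ i j, 1 ≤ i → i ≤ j → j ≤ n → a i ≤ a j) :
    ∀ (C T : Finset ℕ), C ⊆ Finset.Icc 1 n → T ⊆ Finset.Icc 1 n →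
    (∀ x ∈ C, (C.filter (x ≤ ·)).card ≤ (T.filter (x ≤ ·)).card) →
    ∃ T', T' ⊆ T ∧ T'.card = C.card ∧ ∑ i ∈ C, a i ≤ ∑ i ∈ T', a i := by
  intro C
  induction C using Finset.strongInduction with
  | _ C ih =>
    intro T hC hT hall
    rcases C.eq_empty_or_nonempty with rfl | hne
    · exact ⟨∅, by simp⟩
    · set x := C.max' hne with hx
      have hxC : x ∈ C := C.max'_mem hne
      have h1 := hall x hxC
      have hxfil : x ∈ C.filter (x ≤ ·) := Finset.mem_filter.2 ⟨hxC, le_refl x⟩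
      have hQne : (T.filter (x ≤ ·)).Nonempty := by
        have hpos : 0 < (C.filter (x ≤ ·)).card := Finset.card_pos.2 ⟨x, hxfil⟩
        exact Finset.card_pos.1 (lt_of_lt_of_le hpos h1)
      set y := (T.filter (x ≤ ·)).max' hQne with hy
      have hyQ : y ∈ T.filter (x ≤ ·) := Finset.max'_mem _ _
      have hyT : y ∈ T := (Finset.mem_filter.1 hyQ).1
      have hxy : x ≤ y := (Finset.mem_filter.1 hyQ).2
      have hsub : C.erase x ⊂ C := Finset.erase_ssubset hxC
      have hall' : ∀ x' ∈ C.erase x,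
          ((C.erase x).filter (x' ≤ ·)).card ≤ ((T.erase y).filter (x' ≤ ·)).card := by
        intro x' hx'
        have hx'C : x' ∈ C := Finset.mem_of_mem_erase hx'
        have hx'x : x' ≤ x := Finset.le_max' C x' hx'C
        have e1 : (C.erase x).filter (x' ≤ ·) = (C.filter (x' ≤ ·)).erase x := by
          ext z
          simp only [Finset.mem_erase, Finset.mem_filter]
          tauto
        have e2 : (T.erase y).filter (x' ≤ ·) = (T.filter (x' ≤ ·)).erase y := by
          ext z
          simp only [Finset.mem_erase, Finset.mem_filter]
          tauto
        rw [e1, e2, Finset.card_erase_of_mem (Finset.mem_filter.2 ⟨hxC, hx'x⟩),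
            Finset.card_erase_of_mem (Finset.mem_filter.2 ⟨hyT, le_trans hx'x hxy⟩)]
        exact Nat.sub_le_sub_right (hall x' hx'C) 1
      obtain ⟨T0, hT0sub, hT0card, hT0sum⟩ := ih (C.erase x) hsub (T.erase y)
        (fun z hz => hC (Finset.mem_of_mem_erase hz))
        (fun z hz => hT (Finset.mem_of_mem_erase hz)) hall'
      have hyT0 : y ∉ T0 := fun h => (Finset.mem_erase.1 (hT0sub h)).1 rfl
      refine ⟨insert y T0, ?_, ?_, ?_⟩
      · intro z hz
        rcases Finset.mem_insert.1 hz with rfl | hz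
        · exact hyT
        · exact Finset.mem_of_mem_erase (hT0sub hz)
      · have hCpos : 0 < C.card := Finset.card_pos.2 hne
        rw [Finset.card_insert_of_notMem hyT0, hT0card,
            Finset.card_erase_of_mem hxC]
        omega
      · have haxy : a x ≤ a y :=
          hmono x y (Finset.mem_Icc.1 (hC hxC)).1 hxy (Finset.mem_Icc.1 (hT hyT)).2
        calc ∑ i ∈ C, a i = ∑ i ∈ C.erase x, a i + a x := by
              rw [Finset.sum_erase_add _ _ hxC]
          _ ≤ ∑ i ∈ T0, a i + a y := Nat.add_le_add hT0sum haxy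
          _ = ∑ i ∈ insert y T0, a i := by rw [Finset.sum_insert hyT0]; ring

theorem stmt17 (n k : ℕ) (a : ℕ → ℕ)
    (hpos : ∀ i ∈ Finset.Icc 1 n, 0 < a i)
    (hmono : ∀ i j, 1 ≤ i → i ≤ j → j ≤ n → a i ≤ a j)
    (hk : 2 * k ≤ n) (G : Finset ℕ) (hG : G ⊆ Finset.Icc 1 n)
    (hnb : ¬ (G.card ≤ k ∧ ∀ s ∈ G, 2 * (G.filter (· ≤ s)).card ≤ s)) :
    (k < G.card ∨ ∃ t : ℕ, 0 < t ∧ ∃ T : Finset ℕ, Ht n t T ∧ T ⊆ G) ∧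
    (∀ t : ℕ, 0 < t → ∀ T : Finset ℕ, Ht n t T → T ⊆ G →
      ¬ ((∃ F, F ⊆ Finset.Icc 1 n ∧ (∑ i ∈ F, a i) = k ∧ G ⊆ F) ∧
         (∃ F', F' ⊆ Finset.Icc 1 (2 * t - 1) ∧ (∑ i ∈ F', a i) = k ∧
            F' ∩ (G ∩ Finset.Icc 1 (2 * t - 1)) = ∅))) := by
  constructor
  · -- part 1
    by_cases hcard : G.card ≤ k
    · right
      have hbad : (G.filter (fun s => ¬ 2 * (G.filter (· ≤ s)).card ≤ s)).Nonempty := by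
        by_contra h
        rw [Finset.not_nonempty_iff_eq_empty, Finset.filter_eq_empty_iff] at h
        exact hnb ⟨hcard, fun s hs => not_not.1 (h hs)⟩
      set V := G.filter (fun s => ¬ 2 * (G.filter (· ≤ s)).card ≤ s) with hV
      set s := V.min' hbad with hs
      have hsV : s ∈ V := V.min'_mem hbad
      have hsG : s ∈ G := (Finset.mem_filter.1 hsV).1
      have hsviol : ¬ 2 * (G.filter (· ≤ s)).card ≤ s := (Finset.mem_filter.1 hsV).2
      set T := G.filter (· ≤ s) with hT
      have hfilfil : ∀ s' : ℕ, s' ≤ s → T.filter (· ≤ s') = G.filter (· ≤ s') := by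
        intro s' hs'
        rw [hT, Finset.filter_filter]
        apply Finset.filter_congr
        intro z _
        constructor
        · exact fun h => h.2
        · exact fun h => ⟨le_trans h hs', h⟩
      have hsT : s ∈ T := Finset.mem_filter.2 ⟨hsG, le_refl s⟩
      refine ⟨T.card, Finset.card_pos.2 ⟨s, hsT⟩, T, ⟨?_, rfl, ?_, ?_⟩,
        Finset.filter_subset _ _⟩
      · exact (Finset.filter_subset _ _).trans hG
      · intro s' hs' hlt
        have hs'G : s' ∈ G := (Finset.mem_filter.1 hs').1
        have hs's : s' ≤ s := (Finset.mem_filter.1 hs').2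
        rw [hfilfil s' hs's] at hlt ⊢
        have hne : s' ≠ s := by
          intro h
          rw [h] at hlt
          exact absurd rfl (ne_of_lt hlt)
        have hs'lt : s' < s := lt_of_le_of_ne hs's hne
        by_contra hcon
        have hs'V : s' ∈ V := Finset.mem_filter.2 ⟨hs'G, hcon⟩
        exact absurd (V.min'_le s' hs'V) (not_le.2 hs'lt)
      · intro s' hs' heq
        have hs's : s' ≤ s := (Finset.mem_filter.1 hs').2
        have : s < 2 * T.card := not_le.1 hsviol
        omega
    · exact Or.inl (not_le.1 hcard)
  · -- part 2
    rintro t ht T hTfull hTG ⟨⟨F, hFsub, hFsum, hGF⟩, ⟨F', hF'sub, hF'sum, hdisj⟩⟩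
    obtain ⟨hT1, hT2, hT3, hT4⟩ := hTfull
    have hTne : T.Nonempty := Finset.card_pos.1 (hT2 ▸ ht)
    set M := T.max' hTne with hM
    have hMT : M ∈ T := T.max'_mem hTne
    have hrankM : T.filter (· ≤ M) = T := by
      apply Finset.filter_true_of_mem
      intro z hz
      exact Finset.le_max' T z hz
    have hM2t : M < 2 * t := hT4 M hMT (by rw [hrankM, hT2])
    have hMge : 2 * t - 1 ≤ M := by
      rcases Nat.lt_or_ge t 2 with h2 | h2
      · have : t = 1 := by omega
        have : 1 ≤ M := (Finset.mem_Icc.1 (hT1 hMT)).1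
        omega
      · have hEne : (T.erase M).Nonempty := by
          rw [← Finset.card_pos, Finset.card_erase_of_mem hMT, hT2]
          omega
        set s' := (T.erase M).max' hEne with hs'
        have hs'E : s' ∈ T.erase M := (T.erase M).max'_mem hEne
        have hs'T : s' ∈ T := Finset.mem_of_mem_erase hs'E
        have hs'ne : s' ≠ M := (Finset.mem_erase.1 hs'E).1
        have hs'lt : s' < M := lt_of_le_of_ne (Finset.le_max' T s' hs'T) hs'ne
        have hfe : T.filter (· ≤ s') = T.erase M := by
          ext z
          simp only [Finset.mem_filter, Finset.mem_erase]
          constructor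
          · rintro ⟨hzT, hzs⟩
            exact ⟨by omega, hzT⟩
          · rintro ⟨hzM, hzT⟩
            exact ⟨hzT, Finset.le_max' _ z (Finset.mem_erase.2 ⟨hzM, hzT⟩)⟩
        have hrnk : (T.filter (· ≤ s')).card = t - 1 := by
          rw [hfe, Finset.card_erase_of_mem hMT, hT2]
        have := hT3 s' hs'T (by rw [hrnk]; omega)
        rw [hrnk] at this
        omega
    have hMeq : M = 2 * t - 1 := by omega
    have hn2t : 2 * t - 1 ≤ n := by
      have := (Finset.mem_Icc.1 (hT1 hMT)).2
      omega
    have hTsub : T ⊆ Finset.Icc 1 (2 * t - 1) := by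
      intro z hz
      rw [Finset.mem_Icc]
      exact ⟨(Finset.mem_Icc.1 (hT1 hz)).1, hMeq ▸ Finset.le_max' T z hz⟩
    set C := Finset.Icc 1 (2 * t - 1) \ T with hC
    have hCcard : C.card = t - 1 := by
      rw [hC, Finset.card_sdiff_of_subset hTsub, Nat.card_Icc, hT2]
      omega
    have hF'C : F' ⊆ C := by
      intro z hz
      rw [hC, Finset.mem_sdiff]
      refine ⟨hF'sub hz, ?_⟩
      intro hzT
      have : z ∈ F' ∩ (G ∩ Finset.Icc 1 (2 * t - 1)) :=
        Finset.mem_inter.2 ⟨hz, Finset.mem_inter.2 ⟨hTG hzT, hF'sub hz⟩⟩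
      rw [hdisj] at this
      exact absurd this (Finset.notMem_empty z)
    have hall : ∀ x ∈ C, (C.filter (x ≤ ·)).card ≤ (T.filter (x ≤ ·)).card := by
      intro x hxC
      obtain ⟨hxI, hxT⟩ := Finset.mem_sdiff.1 hxC
      obtain ⟨hx1, hx2⟩ := Finset.mem_Icc.1 hxI
      have hjm : (T.filter (· ≤ x)).card + (T.filter (x ≤ ·)).card = t := by
        have hkey : T.filter (x ≤ ·) = T.filter (fun z => ¬ z ≤ x) := by
          ext z
          simp only [Finset.mem_filter]
          constructor
          · rintro ⟨hzT, hxz⟩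
            refine ⟨hzT, fun hzx => ?_⟩
            have : z = x := le_antisymm hzx hxz
            exact hxT (this ▸ hzT)
          · rintro ⟨hzT, hzx⟩
            exact ⟨hzT, by omega⟩
        rw [hkey, Finset.card_filter_add_card_filter_not, hT2]
      have hCfil : C.filter (x ≤ ·) = Finset.Icc x (2 * t - 1) \ T.filter (x ≤ ·) := by
        ext z
        simp only [hC, Finset.mem_filter, Finset.mem_sdiff, Finset.mem_Icc]
        constructor
        · rintro ⟨⟨⟨hz1, hz2⟩, hzT⟩, hxz⟩
          exact ⟨⟨hxz, hz2⟩, fun h => hzT h.1⟩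
        · rintro ⟨⟨hxz, hz2⟩, hzTf⟩
          exact ⟨⟨⟨by omega, hz2⟩, fun hzT => hzTf ⟨hzT, hxz⟩⟩, hxz⟩
      have hQsub : T.filter (x ≤ ·) ⊆ Finset.Icc x (2 * t - 1) := by
        intro z hz
        obtain ⟨hzT, hxz⟩ := Finset.mem_filter.1 hz
        exact Finset.mem_Icc.2 ⟨hxz, (Finset.mem_Icc.1 (hTsub hzT)).2⟩
      have hCfilcard : (C.filter (x ≤ ·)).card
          = (2 * t - x) - (T.filter (x ≤ ·)).card := by
        rw [hCfil, Finset.card_sdiff_of_subset hQsub, Nat.card_Icc]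
        omega
      -- key claim: 2*t ≤ x + 2*m
      have hkey2 : 2 * t ≤ x + 2 * (T.filter (x ≤ ·)).card := by
        rcases (T.filter (· ≤ x)).eq_empty_or_nonempty with hPe | hPne
        · have : (T.filter (· ≤ x)).card = 0 := by rw [hPe]; simp
          omega
        · set y := (T.filter (· ≤ x)).max' hPne with hy
          have hyP : y ∈ T.filter (· ≤ x) := Finset.max'_mem _ _
          have hyT : y ∈ T := (Finset.mem_filter.1 hyP).1
          have hyx : y ≤ x := (Finset.mem_filter.1 hyP).2
          have hylt : y < x := lt_of_le_of_ne hyx (fun h => hxT (h ▸ hyT))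
          have hfy : T.filter (· ≤ y) = T.filter (· ≤ x) := by
            ext z
            simp only [Finset.mem_filter]
            constructor
            · rintro ⟨hzT, hzy⟩
              exact ⟨hzT, le_trans hzy hyx⟩
            · rintro ⟨hzT, hzx⟩
              exact ⟨hzT, Finset.le_max' (T.filter (· ≤ x)) z
                (Finset.mem_filter.2 ⟨hzT, hzx⟩)⟩
          rcases Nat.lt_or_ge (T.filter (· ≤ x)).card t with hjlt | hjge
          · have h3 := hT3 y hyT (by rw [hfy]; exact hjlt)
            rw [hfy] at h3
            omega
          · exfalso
            have hPT : T.filter (· ≤ x) = T :=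
              Finset.eq_of_subset_of_card_le (Finset.filter_subset _ _) (by omega)
            have : M ≤ x := by
              have hm : M ∈ T.filter (· ≤ x) := by rw [hPT]; exact hMT
              exact (Finset.mem_filter.1 hm).2
            have : x = M := by omega
            exact hxT (this ▸ hMT)
      omega
    have hCIcc : C ⊆ Finset.Icc 1 n := by
      intro z hz
      have := Finset.mem_Icc.1 (Finset.mem_sdiff.1 hz).1
      exact Finset.mem_Icc.2 ⟨this.1, le_trans this.2 hn2t⟩
    obtain ⟨T', hT'sub, hT'card, hsumCT'⟩ := hallSum n a hmono C T hCIcc hT1 hall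
    have h1 : ∑ i ∈ F', a i ≤ ∑ i ∈ C, a i :=
      Finset.sum_le_sum_of_subset hF'C
    have hT'lt : ∑ i ∈ T', a i < ∑ i ∈ T, a i := by
      have hcl : T'.card < T.card := by
        rw [hT'card, hCcard, hT2]; omega
      have hns : ¬ T ⊆ T' := fun h => absurd (Finset.card_le_card h) (not_le.2 hcl)
      obtain ⟨z, hzT, hzT'⟩ := Finset.not_subset.1 hns
      exact Finset.sum_lt_sum_of_subset hT'sub hzT hzT' (hpos z (hT1 hzT))
        (fun j _ _ => Nat.zero_le _)
    have h3 : ∑ i ∈ T, a i ≤ ∑ i ∈ F, a i :=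
      Finset.sum_le_sum_of_subset (hTG.trans hGF)
    omega
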